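/- Let G be an unperforated ordered abelian group with order unit u. Then u ⊗ 1 is an order unit of G ⊗_ℤ ℚ, and restriction gives a bijection between the states on (G ⊗_ℤ ℚ, u ⊗ 1) and the states on (G, u). -/

import Mathlib

open TensorProduct

/-- The cone of `ℚ ⊗[ℤ] G` generated by the image of the positive cone of `G`. -/
def qTensorCone (G : Type*) [AddCommGroup G] [PartialOrder G] :
    Set (ℚ ⊗[ℤ] G) :=
  {x | ∃ (q : ℚ) (g : G), 0 ≤ q ∧ 0 ≤ g ∧ x = q • ((1 : ℚ) ⊗ₜ[ℤ] g)}

/-- States on `(G, u)`: additive, positive, normalized at `u`. -/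
def IsStateOn {G : Type*} [AddCommGroup G] [PartialOrder G] (u : G) (f : G → ℝ) : Prop :=
  (∀ a b : G, f (a + b) = f a + f b) ∧ (∀ a : G, 0 ≤ a → 0 ≤ f a) ∧ f u = 1

/-- States on `(G ⊗_ℤ ℚ, u ⊗ 1)`. -/
def IsTensorStateOn {G : Type*} [AddCommGroup G] [PartialOrder G] (u : G)
    (φ : ℚ ⊗[ℤ] G → ℝ) : Prop :=
  (∀ x y : ℚ ⊗[ℤ] G, φ (x + y) = φ x + φ y) ∧
  (∀ x ∈ qTensorCone G, 0 ≤ φ x) ∧ φ ((1 : ℚ) ⊗ₜ[ℤ] u) = 1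

/-- Every element of `ℚ ⊗[ℤ] G` has, after clearing denominators, the form `1 ⊗ g`. -/
theorem qrepr {G : Type*} [AddCommGroup G] (x : ℚ ⊗[ℤ] G) :
    ∃ (n : ℕ) (g : G), 0 < n ∧ (n : ℚ) • x = (1:ℚ) ⊗ₜ[ℤ] g := by
  induction x using TensorProduct.induction_on with
  | zero => exact ⟨1, 0, one_pos, by simp⟩
  | tmul q g =>
      refine ⟨q.den, q.num • g, q.den_pos, ?_⟩
      rw [TensorProduct.smul_tmul', smul_eq_mul, ← TensorProduct.smul_tmul]
      congr 1
      rw [zsmul_eq_mul, mul_one, mul_comm]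
      exact_mod_cast (Rat.mul_den_eq_num q)
  | add x y hx hy =>
      obtain ⟨n1, g1, hn1, h1⟩ := hx
      obtain ⟨n2, g2, hn2, h2⟩ := hy
      refine ⟨n1 * n2, n2 • g1 + n1 • g2, Nat.mul_pos hn1 hn2, ?_⟩
      have e1 : ((n1 * n2 : ℕ) : ℚ) • x = (n2 : ℚ) • ((n1 : ℚ) • x) := by
        push_cast; rw [mul_comm, mul_smul]
      have e2 : ((n1 * n2 : ℕ) : ℚ) • y = (n1 : ℚ) • ((n2 : ℚ) • y) := by
        push_cast; rw [mul_smul]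
      rw [smul_add, e1, e2, h1, h2, tmul_add, tmul_smul, tmul_smul,
        Nat.cast_smul_eq_nsmul, Nat.cast_smul_eq_nsmul]

/-- The canonical extension of an additive map `G →+ ℝ` to `ℚ ⊗[ℤ] G`. -/
noncomputable def tstate {G : Type*} [AddCommGroup G] (L : G →+ ℝ) : ℚ ⊗[ℤ] G →ₗ[ℤ] ℝ :=
  TensorProduct.lift (LinearMap.mk₂ ℤ (fun q g => (q : ℝ) * L g)
    (fun q q' g => by push_cast; ring)
    (fun c q g => by
      simp only [zsmul_eq_mul]; push_cast; ring)
    (fun q g g' => by simp only [map_add]; ring)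
    (fun c q g => by simp only [map_zsmul, zsmul_eq_mul]; ring))

theorem tstate_tmul {G : Type*} [AddCommGroup G] (L : G →+ ℝ) (q : ℚ) (g : G) :
    tstate L (q ⊗ₜ[ℤ] g) = (q : ℝ) * L g := rfl

theorem one_smul_mem_aux {G : Type*} [AddCommGroup G] (q : ℚ) (g : G) :
    q • ((1 : ℚ) ⊗ₜ[ℤ] g) = q ⊗ₜ[ℤ] g := by
  rw [TensorProduct.smul_tmul', smul_eq_mul, mul_one]

/-- If `G` is an unperforated ordered abelian group with order unit `u`, then
`u ⊗ 1` is an order unit of `G ⊗_ℤ ℚ`, and restriction along `g ↦ g ⊗ 1` gives a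
bijection between the states on `(G ⊗_ℤ ℚ, u ⊗ 1)` and the states on `(G, u)`. -/
theorem stmt6 {G : Type*} [AddCommGroup G] [PartialOrder G]
    (hadd : ∀ g h x : G, g ≤ h → g + x ≤ h + x)
    (hdir : ∀ g h : G, ∃ y : G, g ≤ y ∧ h ≤ y)
    (hunperf : ∀ (n : ℕ) (g : G), 0 < n → 0 ≤ n • g → 0 ≤ g)
    (u : G) (hu : 0 ≤ u ∧ ∀ g : G, ∃ n : ℕ, -(n • u) ≤ g ∧ g ≤ n • u) :
    ((1 : ℚ) ⊗ₜ[ℤ] u ∈ qTensorCone G ∧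
      ∀ x : ℚ ⊗[ℤ] G, ∃ n : ℕ,
        x + n • ((1 : ℚ) ⊗ₜ[ℤ] u) ∈ qTensorCone G ∧
        n • ((1 : ℚ) ⊗ₜ[ℤ] u) - x ∈ qTensorCone G) ∧
    (∀ φ : ℚ ⊗[ℤ] G → ℝ, IsTensorStateOn u φ →
      IsStateOn u (fun g : G => φ ((1 : ℚ) ⊗ₜ[ℤ] g))) ∧
    (∀ ψ : G → ℝ, IsStateOn u ψ →
      ∃! φ : ℚ ⊗[ℤ] G → ℝ, IsTensorStateOn u φ ∧
        (fun g : G => φ ((1 : ℚ) ⊗ₜ[ℤ] g)) = ψ) := by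
  -- basic consequences of translation invariance
  have sub_nn : ∀ a b : G, a ≤ b → 0 ≤ b - a := by
    intro a b h
    have := hadd a b (-a) h
    simpa [sub_eq_add_neg] using this
  have add_nn : ∀ a b : G, 0 ≤ a → 0 ≤ b → 0 ≤ a + b := by
    intro a b ha hb
    have := hadd 0 a b ha
    have h2 : b ≤ a + b := by simpa using this
    exact le_trans hb h2
  have nsmul_nn : ∀ n : ℕ, 0 ≤ n • u := by
    intro n
    induction n with
    | zero => simp
    | succ k ih =>
        rw [succ_nsmul]
        exact add_nn _ _ ih hu.1
  -- moving natural multiples of `u` into / out of the tensor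
  have nsmul_tmul : ∀ (k : ℕ), (1 : ℚ) ⊗ₜ[ℤ] (k • u) = (k : ℚ) • ((1 : ℚ) ⊗ₜ[ℤ] u) := by
    intro k
    rw [tmul_smul, Nat.cast_smul_eq_nsmul]
  refine ⟨⟨⟨1, u, by norm_num, hu.1, by rw [one_smul]⟩, ?_⟩, ?_, ?_⟩
  · -- order unit property
    intro x
    obtain ⟨n, g, hn, hx⟩ := qrepr x
    obtain ⟨m, hm1, hm2⟩ := hu.2 g
    have hnQ : (0:ℚ) < (n : ℚ) := by exact_mod_cast hn
    have hsx : (n : ℚ)⁻¹ • ((1:ℚ) ⊗ₜ[ℤ] g) = x := by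
      rw [← hx, smul_smul, inv_mul_cancel₀ (ne_of_gt hnQ), one_smul]
    have hsu : (n : ℚ)⁻¹ • ((1:ℚ) ⊗ₜ[ℤ] ((n * m) • u)) = m • ((1:ℚ) ⊗ₜ[ℤ] u) := by
      rw [nsmul_tmul, smul_smul]
      have : ((n:ℚ))⁻¹ * ((n * m : ℕ) : ℚ) = (m : ℚ) := by
        push_cast
        field_simp
      rw [this, Nat.cast_smul_eq_nsmul]
    have hsplit : n * m = m + (n * m - m) :=
      (Nat.add_sub_cancel' (Nat.le_mul_of_pos_left m hn)).symm
    refine ⟨m, ⟨(n:ℚ)⁻¹, g + (n * m) • u, le_of_lt (inv_pos.mpr hnQ), ?_, ?_⟩,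
      ⟨(n:ℚ)⁻¹, (n * m) • u - g, le_of_lt (inv_pos.mpr hnQ), ?_, ?_⟩⟩
    · -- 0 ≤ g + (n*m) • u
      have h1 : 0 ≤ g + m • u := by
        have := sub_nn _ _ hm1
        simpa [sub_neg_eq_add, add_comm] using this
      have : g + (n * m) • u = (g + m • u) + (n * m - m) • u := by
        nth_rewrite 1 [hsplit]
        rw [add_nsmul, ← add_assoc]
      rw [this]
      exact add_nn _ _ h1 (nsmul_nn _)
    · rw [tmul_add, smul_add, hsx, hsu]
    · -- 0 ≤ (n*m) • u - g
      have h1 : 0 ≤ m • u - g := sub_nn _ _ hm2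
      have : (n * m) • u - g = (m • u - g) + (n * m - m) • u := by
        nth_rewrite 1 [hsplit]
        rw [add_nsmul]
        abel
      rw [this]
      exact add_nn _ _ h1 (nsmul_nn _)
    · rw [tmul_sub, smul_sub, hsx, hsu]
  · -- restriction of a tensor state is a state
    intro φ hφ
    refine ⟨fun a b => ?_, fun a ha => ?_, hφ.2.2⟩
    · show φ ((1:ℚ) ⊗ₜ[ℤ] (a + b)) = φ ((1:ℚ) ⊗ₜ[ℤ] a) + φ ((1:ℚ) ⊗ₜ[ℤ] b)
      rw [tmul_add]
      exact hφ.1 _ _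
    · exact hφ.2.1 _ ⟨1, a, by norm_num, ha, by rw [one_smul]⟩
  · -- existence and uniqueness of the extension
    intro ψ hψ
    set L : G →+ ℝ := AddMonoidHom.mk' ψ (fun a b => hψ.1 a b) with hL
    refine ⟨fun x => tstate L x, ⟨⟨fun x y => map_add _ x y, ?_, ?_⟩, ?_⟩, ?_⟩
    · rintro x ⟨q, g, hq, hg, rfl⟩
      show (0:ℝ) ≤ tstate L (q • ((1:ℚ) ⊗ₜ[ℤ] g))
      rw [one_smul_mem_aux, tstate_tmul]
      exact mul_nonneg (by exact_mod_cast hq) (hψ.2.1 g hg)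
    · show tstate L ((1:ℚ) ⊗ₜ[ℤ] u) = 1
      rw [tstate_tmul]
      simpa [hL] using hψ.2.2
    · funext g
      show tstate L ((1:ℚ) ⊗ₜ[ℤ] g) = ψ g
      rw [tstate_tmul]
      simp [hL]
    · rintro φ' ⟨hφ', hrest⟩
      have hres : ∀ g : G, φ' ((1:ℚ) ⊗ₜ[ℤ] g) = ψ g := fun g => congrFun hrest g
      set F' : ℚ ⊗[ℤ] G →+ ℝ := AddMonoidHom.mk' φ' (fun a b => hφ'.1 a b) with hF
      funext x
      induction x using TensorProduct.induction_on with
      | zero => exact F'.map_zero.trans (map_zero (tstate L)).symm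
      | tmul q g =>
          have key : (q.den : ℤ) • (q ⊗ₜ[ℤ] g) = q.num • ((1:ℚ) ⊗ₜ[ℤ] g) := by
            rw [TensorProduct.smul_tmul', TensorProduct.smul_tmul']
            congr 1
            rw [zsmul_eq_mul, zsmul_eq_mul, mul_one]
            push_cast
            rw [mul_comm]
            exact_mod_cast (Rat.mul_den_eq_num q)
          have h1 : (q.den : ℝ) * φ' (q ⊗ₜ[ℤ] g) = (q.num : ℝ) * ψ g := by
            have := congrArg F' key
            rw [F'.map_zsmul, F'.map_zsmul] at this
            have h2 : F' (q ⊗ₜ[ℤ] g) = φ' (q ⊗ₜ[ℤ] g) := rfl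
            have h3 : F' ((1:ℚ) ⊗ₜ[ℤ] g) = ψ g := hres g
            rw [h2, h3] at this
            rw [zsmul_eq_mul, zsmul_eq_mul] at this
            exact_mod_cast this
          have hden : ((q.den : ℝ)) ≠ 0 := by
            exact_mod_cast q.den_nz
          show φ' (q ⊗ₜ[ℤ] g) = tstate L (q ⊗ₜ[ℤ] g)
          rw [tstate_tmul]
          have hcast : (q : ℝ) = (q.num : ℝ) / (q.den : ℝ) := by
            rw [Rat.cast_def]
          rw [hcast]
          have hLg : L g = ψ g := rfl
          rw [hLg]
          field_simp
          linarith [h1]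
      | add x y hx hy =>
          show φ' (x + y) = tstate L (x + y)
          rw [hφ'.1 x y, map_add, hx, hy]
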